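/- (Data processing inequality for mutual affinity.) Let μ be a joint probability mass function on 𝒵 × ℋ₁ × ℋ₂ for countable alphabets that forms a Markov chain Z → H₁ → H₂, i.e., μ(z,h₁,h₂)·μ_{H₁}(h₁) = μ_{Z H₁}(z,h₁)·μ_{H₁H₂}(h₁,h₂) for all z, h₁, h₂. Then the mutual affinities satisfy I(Z,H₁) ≥ I(Z,H₂), i.e., ‖μ_Z ⊗ μ_{H₁}, μ_{Z H₁}‖ ≥ ‖μ_Z ⊗ μ_{H₂}, μ_{Z H₂}‖. -/

import Mathlib

/-- Total variation distance between two pmfs: `1 - ∑ min`. -/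
noncomputable def tv {A : Type*} (p q : A → ℝ) : ℝ := 1 - ∑' a, min (p a) (q a)

/-- Data processing inequality for mutual affinity: if
`Z → H₁ → H₂` is a Markov chain, then `I(Z,H₁) ≥ I(Z,H₂)`. -/
theorem stmt7 {Z H₁ H₂ : Type*} [Countable Z] [Countable H₁] [Countable H₂]
    (μ : Z × H₁ × H₂ → ℝ) (h0 : ∀ p, 0 ≤ μ p) (h1 : HasSum μ 1)
    (μZ : Z → ℝ) (hZ : ∀ z, μZ z = ∑' p : H₁ × H₂, μ (z, p))
    (μH₁ : H₁ → ℝ) (hH₁ : ∀ h₁, μH₁ h₁ = ∑' p : Z × H₂, μ (p.1, h₁, p.2))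
    (μH₂ : H₂ → ℝ) (hH₂ : ∀ h₂, μH₂ h₂ = ∑' p : Z × H₁, μ (p.1, p.2, h₂))
    (μZH₁ : Z × H₁ → ℝ) (hZH₁ : ∀ z h₁, μZH₁ (z, h₁) = ∑' h₂, μ (z, h₁, h₂))
    (μZH₂ : Z × H₂ → ℝ) (hZH₂ : ∀ z h₂, μZH₂ (z, h₂) = ∑' h₁, μ (z, h₁, h₂))
    (μH₁H₂ : H₁ × H₂ → ℝ) (hH₁H₂ : ∀ h₁ h₂, μH₁H₂ (h₁, h₂) = ∑' z, μ (z, h₁, h₂))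
    (hMarkov : ∀ z h₁ h₂, μ (z, h₁, h₂) * μH₁ h₁ = μZH₁ (z, h₁) * μH₁H₂ (h₁, h₂)) :
    tv (fun p : Z × H₁ => μZ p.1 * μH₁ p.2) μZH₁ ≥
      tv (fun p : Z × H₂ => μZ p.1 * μH₂ p.2) μZH₂ := by
  have hμ : Summable μ := h1.summable
  -- slice summabilities
  have hs1 : ∀ z h₁, Summable (fun h₂ => μ (z, h₁, h₂)) := fun z h₁ =>
    hμ.comp_injective (fun a b h => by simpa using h)
  have hs2 : ∀ z h₂, Summable (fun h₁ => μ (z, h₁, h₂)) := fun z h₂ =>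
    hμ.comp_injective (fun a b h => by simpa using h)
  have hs4 : ∀ h₁, Summable (fun q : H₂ × Z => μ (q.2, h₁, q.1)) := fun h₁ =>
    hμ.comp_injective (fun a b h => by
      simp only [Prod.mk.injEq] at h
      exact Prod.ext h.2.2 h.1)
  have hs5 : ∀ h₂, Summable (fun q : H₁ × Z => μ (q.2, q.1, h₂)) := fun h₂ =>
    hμ.comp_injective (fun a b h => by
      simp only [Prod.mk.injEq] at h
      exact Prod.ext h.2.1 h.1)
  -- nonnegativity of marginals
  have hμZ0 : ∀ z, 0 ≤ μZ z := fun z => (hZ z) ▸ tsum_nonneg (fun _ => h0 _)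
  have hμH₁0 : ∀ h₁', 0 ≤ μH₁ h₁' := fun h₁' => (hH₁ h₁') ▸ tsum_nonneg (fun _ => h0 _)
  have hμH₂0 : ∀ h₂', 0 ≤ μH₂ h₂' := fun h₂' => (hH₂ h₂') ▸ tsum_nonneg (fun _ => h0 _)
  have hμZH₁0 : ∀ z h₁', 0 ≤ μZH₁ (z, h₁') := fun z h₁' =>
    (hZH₁ z h₁') ▸ tsum_nonneg (fun _ => h0 _)
  have hμZH₂0 : ∀ z h₂', 0 ≤ μZH₂ (z, h₂') := fun z h₂' =>
    (hZH₂ z h₂') ▸ tsum_nonneg (fun _ => h0 _)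
  have hμH₁H₂0 : ∀ h₁' h₂', 0 ≤ μH₁H₂ (h₁', h₂') := fun h₁' h₂' =>
    (hH₁H₂ h₁' h₂') ▸ tsum_nonneg (fun _ => h0 _)
  -- marginal identities
  have hH1sum : ∀ h₁, ∑' h₂, μH₁H₂ (h₁, h₂) = μH₁ h₁ := by
    intro h₁
    have e1 : ∑' p : Z × H₂, μ (p.1, h₁, p.2) = ∑' q : H₂ × Z, μ (q.2, h₁, q.1) :=
      ((Equiv.prodComm Z H₂).tsum_eq (fun q : H₂ × Z => μ (q.2, h₁, q.1)))
    have e2 : ∑' q : H₂ × Z, μ (q.2, h₁, q.1) = ∑' h₂, ∑' z, μ (z, h₁, h₂) :=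
      Summable.tsum_prod (hs4 h₁)
    rw [hH₁ h₁, e1, e2]
    exact tsum_congr (fun h₂ => hH₁H₂ h₁ h₂)
  have hH2sum : ∀ h₂, ∑' h₁, μH₁H₂ (h₁, h₂) = μH₂ h₂ := by
    intro h₂
    have e1 : ∑' p : Z × H₁, μ (p.1, p.2, h₂) = ∑' q : H₁ × Z, μ (q.2, q.1, h₂) :=
      ((Equiv.prodComm Z H₁).tsum_eq (fun q : H₁ × Z => μ (q.2, q.1, h₂)))
    have e2 : ∑' q : H₁ × Z, μ (q.2, q.1, h₂) = ∑' h₁, ∑' z, μ (z, h₁, h₂) :=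
      Summable.tsum_prod (hs5 h₂)
    rw [hH₂ h₂, e1, e2]
    exact tsum_congr (fun h₁ => hH₁H₂ h₁ h₂)
  -- summability of μH₁H₂ slices in h₁
  have hH₁H₂slice : ∀ h₂, Summable (fun h₁ => μH₁H₂ (h₁, h₂)) := by
    intro h₂
    have : (fun h₁ => μH₁H₂ (h₁, h₂)) = fun h₁ => ∑' z, μ (z, h₁, h₂) :=
      funext fun h₁ => hH₁H₂ h₁ h₂
    rw [this]
    exact ((summable_prod_of_nonneg (fun q => h0 _)).mp (hs5 h₂)).2
  -- the key three-variable function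
  set g : Z → H₁ → H₂ → ℝ :=
    fun z h₁ h₂ => min (μZ z * μH₁H₂ (h₁, h₂)) (μ (z, h₁, h₂)) with hg
  have hg0 : ∀ z h₁ h₂, 0 ≤ g z h₁ h₂ := fun z h₁ h₂ =>
    le_min (mul_nonneg (hμZ0 z) (hμH₁H₂0 h₁ h₂)) (h0 _)
  have hgle : ∀ z h₁ h₂, g z h₁ h₂ ≤ μ (z, h₁, h₂) := fun z h₁ h₂ => min_le_right _ _
  -- Lemma A : exact marginalization over h₂
  have lemA : ∀ z h₁, ∑' h₂, g z h₁ h₂ = min (μZ z * μH₁ h₁) (μZH₁ (z, h₁)) := by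
    intro z h₁
    rcases (hμH₁0 h₁).eq_or_lt with hc | hc
    · -- μH₁ h₁ = 0 : everything vanishes
      have hzero : ∀ z' h₂, μ (z', h₁, h₂) = 0 := by
        intro z' h₂
        refine le_antisymm ?_ (h0 _)
        have := Summable.le_tsum (hμ.comp_injective
          (i := fun p : Z × H₂ => (p.1, h₁, p.2))
          (fun a b h => by
            simp only [Prod.mk.injEq] at h
            exact Prod.ext h.1 h.2.2)) (z', h₂) (fun _ _ => h0 _)
        calc μ (z', h₁, h₂) ≤ ∑' p : Z × H₂, μ (p.1, h₁, p.2) := this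
          _ = μH₁ h₁ := (hH₁ h₁).symm
          _ = 0 := hc.symm
      have hP : ∀ h₂, μH₁H₂ (h₁, h₂) = 0 := fun h₂ => by
        rw [hH₁H₂ h₁ h₂]; simp [hzero]
      have hQ : μZH₁ (z, h₁) = 0 := by rw [hZH₁ z h₁]; simp [hzero]
      have : ∀ h₂, g z h₁ h₂ = 0 := fun h₂ => by
        simp [hg, hP h₂, hzero z h₂]
      rw [tsum_congr this, tsum_zero, hQ, ← hc]
      simp
    · -- μH₁ h₁ > 0
      have hcne : μH₁ h₁ ≠ 0 := ne_of_gt hc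
      have key : ∀ h₂, μ (z, h₁, h₂) = μZH₁ (z, h₁) * μH₁H₂ (h₁, h₂) / μH₁ h₁ := by
        intro h₂
        rw [eq_div_iff hcne]
        exact hMarkov z h₁ h₂
      have expand : ∀ h₂, g z h₁ h₂ =
          min (μZ z * μH₁ h₁) (μZH₁ (z, h₁)) * (μH₁H₂ (h₁, h₂) / μH₁ h₁) := by
        intro h₂
        have e1 : μZ z * μH₁H₂ (h₁, h₂) =
            (μZ z * μH₁ h₁) * (μH₁H₂ (h₁, h₂) / μH₁ h₁) := by
          field_simp
        have e2 : μZH₁ (z, h₁) * μH₁H₂ (h₁, h₂) / μH₁ h₁ =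
            μZH₁ (z, h₁) * (μH₁H₂ (h₁, h₂) / μH₁ h₁) := by ring
        rw [hg]
        simp only []
        rw [key h₂, e1, e2,
          ← min_mul_of_nonneg _ _ (div_nonneg (hμH₁H₂0 h₁ h₂) hc.le)]
      rw [tsum_congr expand, tsum_mul_left, tsum_div_const, hH1sum h₁,
        div_self hcne, mul_one]
  -- Lemma B : sub-marginalization over h₁
  have gsliceSummable : ∀ z h₂, Summable (fun h₁ => g z h₁ h₂) := fun z h₂ =>
    Summable.of_nonneg_of_le (fun h₁ => hg0 z h₁ h₂) (fun h₁ => hgle z h₁ h₂) (hs2 z h₂)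
  have lemB : ∀ z h₂, ∑' h₁, g z h₁ h₂ ≤ min (μZ z * μH₂ h₂) (μZH₂ (z, h₂)) := by
    intro z h₂
    refine le_min ?_ ?_
    · calc ∑' h₁, g z h₁ h₂ ≤ ∑' h₁, μZ z * μH₁H₂ (h₁, h₂) :=
            Summable.tsum_le_tsum (fun h₁ => min_le_left _ _) (gsliceSummable z h₂)
              ((hH₁H₂slice h₂).mul_left (μZ z))
        _ = μZ z * ∑' h₁, μH₁H₂ (h₁, h₂) := tsum_mul_left
        _ = μZ z * μH₂ h₂ := by rw [hH2sum h₂]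
    · calc ∑' h₁, g z h₁ h₂ ≤ ∑' h₁, μ (z, h₁, h₂) :=
            Summable.tsum_le_tsum (fun h₁ => min_le_right _ _) (gsliceSummable z h₂) (hs2 z h₂)
        _ = μZH₂ (z, h₂) := (hZH₂ z h₂).symm
  -- global summabilities for Fubini
  have hG : Summable (fun q : (Z × H₁) × H₂ => g q.1.1 q.1.2 q.2) := by
    refine Summable.of_nonneg_of_le (fun q => hg0 _ _ _) (fun q => hgle _ _ _) ?_
    exact hμ.comp_injective (Equiv.prodAssoc Z H₁ H₂).injective
  have hG' : Summable (fun q : (Z × H₂) × H₁ => g q.1.1 q.2 q.1.2) := by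
    refine Summable.of_nonneg_of_le (fun q => hg0 _ _ _) (fun q => hgle _ _ _) ?_
    exact hμ.comp_injective (i := fun q : (Z × H₂) × H₁ => (q.1.1, q.2, q.1.2))
      (fun a b h => by
        simp only [Prod.mk.injEq] at h
        exact Prod.ext (Prod.ext h.1 h.2.2) h.2.1)
  have hμZH₂summ : Summable μZH₂ := by
    have h' : Summable (fun q : (Z × H₂) × H₁ => μ (q.1.1, q.2, q.1.2)) :=
      hμ.comp_injective (fun a b h => by
        simp only [Prod.mk.injEq] at h
        exact Prod.ext (Prod.ext h.1 h.2.2) h.2.1)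
    have := ((summable_prod_of_nonneg (fun q => h0 _)).mp h').2
    have heq : μZH₂ = fun p : Z × H₂ => ∑' h₁, μ (p.1, h₁, p.2) :=
      funext fun p => hZH₂ p.1 p.2
    rw [heq]
    exact this
  -- the main inequality between the two total min-sums
  have key : ∑' p : Z × H₁, min (μZ p.1 * μH₁ p.2) (μZH₁ p)
      ≤ ∑' p : Z × H₂, min (μZ p.1 * μH₂ p.2) (μZH₂ p) := by
    calc ∑' p : Z × H₁, min (μZ p.1 * μH₁ p.2) (μZH₁ p)
        = ∑' p : Z × H₁, ∑' h₂, g p.1 p.2 h₂ :=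
          tsum_congr (fun p => (lemA p.1 p.2).symm)
      _ = ∑' q : (Z × H₁) × H₂, g q.1.1 q.1.2 q.2 := (Summable.tsum_prod hG).symm
      _ = ∑' q : (Z × H₂) × H₁, g q.1.1 q.2 q.1.2 :=
          (Equiv.tsum_eq (⟨fun q => ((q.1.1, q.2), q.1.2),
            fun q => ((q.1.1, q.2), q.1.2), fun _ => rfl, fun _ => rfl⟩ :
              (Z × H₂) × H₁ ≃ (Z × H₁) × H₂)
            (fun q : (Z × H₁) × H₂ => g q.1.1 q.1.2 q.2)).symm
      _ = ∑' p : Z × H₂, ∑' h₁, g p.1 h₁ p.2 := Summable.tsum_prod hG'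
      _ ≤ ∑' p : Z × H₂, min (μZ p.1 * μH₂ p.2) (μZH₂ p) := by
          refine Summable.tsum_le_tsum (fun p => lemB p.1 p.2) ?_ ?_
          · exact ((summable_prod_of_nonneg (fun q => hg0 _ _ _)).mp hG').2
          · exact Summable.of_nonneg_of_le
              (fun p => le_min (mul_nonneg (hμZ0 p.1) (hμH₂0 p.2)) (hμZH₂0 p.1 p.2))
              (fun p => min_le_right _ _) hμZH₂summ
  unfold tv
  linarith
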